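/- Let γ > 1 be a real number. Then for all real numbers n > 0 and ρ > 0, p(n|ρ) ≥ (γ(γ−1)/2) · min{n^{γ−2}, ρ^{γ−2}} · (n − ρ)². -/

import Mathlib

open Set MeasureTheory intervalIntegral

/-- The relative pressure functional `p(n|ρ) = n^γ − ρ^γ − γ ρ^{γ−1}(n − ρ)`. -/
noncomputable def relPressure (γ n ρ : ℝ) : ℝ :=
  n ^ γ - ρ ^ γ - γ * ρ ^ (γ - 1) * (n - ρ)

lemma min_rpow_le {a b s p : ℝ} (ha : 0 < a) (has : a ≤ s) (hsb : s ≤ b) :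
    min (a ^ p) (b ^ p) ≤ s ^ p := by
  rcases le_total 0 p with hp | hp
  · exact min_le_of_left_le (Real.rpow_le_rpow ha.le has hp)
  · exact min_le_of_right_le (Real.rpow_le_rpow_of_nonpos (ha.trans_le has) hsb hp)

lemma mvt_rpow {a b : ℝ} (q : ℝ) (ha : 0 < a) (hab : a < b) :
    ∃ s ∈ Set.Ioo a b, b ^ q - a ^ q = q * s ^ (q - 1) * (b - a) := by
  have hcont : ContinuousOn (fun x : ℝ => x ^ q) (Set.Icc a b) := fun x hx =>
    (Real.continuousAt_rpow_const x q (Or.inl (ha.trans_le hx.1).ne')).continuousWithinAt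
  have hderiv : ∀ x ∈ Set.Ioo a b, HasDerivAt (fun x : ℝ => x ^ q) (q * x ^ (q - 1)) x :=
    fun x hx => Real.hasDerivAt_rpow_const (Or.inl (ha.trans hx.1).ne')
  obtain ⟨c, hc, hceq⟩ := exists_hasDerivAt_eq_slope _ _ hab hcont hderiv
  refine ⟨c, hc, ?_⟩
  rw [hceq]
  exact (div_mul_cancel₀ _ (sub_ne_zero.2 hab.ne')).symm

theorem relPressure_ge_min_pow (γ : ℝ) (hγ : 1 < γ) :
    ∀ n ρ : ℝ, 0 < n → 0 < ρ →
      γ * (γ - 1) / 2 * min (n ^ (γ - 2)) (ρ ^ (γ - 2)) * (n - ρ) ^ 2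
        ≤ relPressure γ n ρ := by
  intro n ρ hn hρ
  set m : ℝ := min (n ^ (γ - 2)) (ρ ^ (γ - 2)) with hm
  have hm0 : 0 ≤ m :=
    le_min (Real.rpow_pos_of_pos hn _).le (Real.rpow_pos_of_pos hρ _).le
  have hγ0 : (0:ℝ) < γ := lt_trans one_pos hγ
  have hγ1 : (0:ℝ) < γ - 1 := sub_pos.mpr hγ
  -- positivity on the interval
  have hpos : ∀ t ∈ Set.uIcc ρ n, (0:ℝ) < t := fun t ht =>
    lt_of_lt_of_le (lt_min hρ hn) ht.1
  -- derivative of the pressure in its first argument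
  have hf : ∀ t ∈ Set.uIcc ρ n,
      HasDerivAt (fun t => t ^ γ - ρ ^ γ - γ * ρ ^ (γ - 1) * (t - ρ))
        (γ * t ^ (γ - 1) - γ * ρ ^ (γ - 1)) t := by
    intro t ht
    have h1 : HasDerivAt (fun t : ℝ => t ^ γ) (γ * t ^ (γ - 1)) t :=
      Real.hasDerivAt_rpow_const (Or.inl (hpos t ht).ne')
    have h2 : HasDerivAt (fun t : ℝ => γ * ρ ^ (γ - 1) * (t - ρ)) (γ * ρ ^ (γ - 1)) t := by
      simpa using ((hasDerivAt_id t).sub_const ρ).const_mul (γ * ρ ^ (γ - 1))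
    exact (h1.sub_const (ρ ^ γ)).sub h2
  -- integrability of the derivative
  have hcontg : ContinuousOn (fun t : ℝ => γ * t ^ (γ - 1) - γ * ρ ^ (γ - 1)) (Set.uIcc ρ n) := by
    apply ContinuousOn.sub _ continuousOn_const
    apply ContinuousOn.mul continuousOn_const
    exact fun t ht =>
      (Real.continuousAt_rpow_const t _ (Or.inl (hpos t ht).ne')).continuousWithinAt
  have hintg : IntervalIntegrable (fun t : ℝ => γ * t ^ (γ - 1) - γ * ρ ^ (γ - 1))
      volume ρ n := hcontg.intervalIntegrable
  have hintl : ∀ a b : ℝ, IntervalIntegrable (fun t : ℝ => γ * (γ - 1) * m * (t - ρ))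
      volume a b := fun a b => (Continuous.intervalIntegrable (by continuity) a b)
  -- FTC
  have hFTC : relPressure γ n ρ = ∫ t in ρ..n, (γ * t ^ (γ - 1) - γ * ρ ^ (γ - 1)) := by
    rw [integral_eq_sub_of_hasDerivAt hf hintg]
    simp [relPressure]
  -- value of the lower integral
  have hlow : ∀ a b : ℝ, (∫ t in a..b, γ * (γ - 1) * m * (t - ρ))
      = γ * (γ - 1) / 2 * m * ((b - ρ) ^ 2 - (a - ρ) ^ 2) := by
    intro a b
    have : (∫ t in a..b, γ * (γ - 1) * m * (t - ρ))
        = γ * (γ - 1) * m * ∫ t in a..b, (t - ρ) := integral_const_mul _ _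
    rw [this, integral_sub intervalIntegrable_id (intervalIntegrable_const), integral_id,
      intervalIntegral.integral_const, smul_eq_mul]
    ring
  -- pointwise bound via MVT
  have key : ∀ t : ℝ, 0 < t → ρ ≤ n → t ∈ Set.Icc ρ n →
      γ * (γ - 1) * m * (t - ρ) ≤ γ * t ^ (γ - 1) - γ * ρ ^ (γ - 1) := by
    intro t ht _ htI
    rcases eq_or_lt_of_le htI.1 with rfl | hlt
    · simp
    · obtain ⟨s, hs, hseq⟩ := mvt_rpow (γ - 1) hρ hlt
      rw [show γ - 1 - 1 = γ - 2 by ring] at hseq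
      have hms : m ≤ s ^ (γ - 2) := by
        rw [hm, min_comm]
        exact min_rpow_le hρ hs.1.le (hs.2.le.trans htI.2)
      have heq : γ * t ^ (γ - 1) - γ * ρ ^ (γ - 1) = γ * ((γ - 1) * s ^ (γ - 2) * (t - ρ)) := by
        rw [← hseq]; ring
      rw [heq]
      have htρ : 0 ≤ t - ρ := sub_nonneg.mpr htI.1
      have h3 : m * (t - ρ) ≤ s ^ (γ - 2) * (t - ρ) := mul_le_mul_of_nonneg_right hms htρ
      nlinarith [mul_le_mul_of_nonneg_left h3 (mul_pos hγ0 hγ1).le]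
  have key' : ∀ t : ℝ, 0 < t → n ≤ ρ → t ∈ Set.Icc n ρ →
      γ * t ^ (γ - 1) - γ * ρ ^ (γ - 1) ≤ γ * (γ - 1) * m * (t - ρ) := by
    intro t ht _ htI
    rcases eq_or_lt_of_le htI.2 with rfl | hlt
    · simp
    · obtain ⟨s, hs, hseq⟩ := mvt_rpow (γ - 1) ht hlt
      rw [show γ - 1 - 1 = γ - 2 by ring] at hseq
      have hms : m ≤ s ^ (γ - 2) := by
        rw [hm]
        exact min_rpow_le hn (htI.1.trans hs.1.le) hs.2.le
      have heq : γ * t ^ (γ - 1) - γ * ρ ^ (γ - 1) = γ * ((γ - 1) * s ^ (γ - 2) * (t - ρ)) := by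
        nlinarith [hseq]
      rw [heq]
      have htρ : t - ρ ≤ 0 := sub_nonpos.mpr htI.2
      have h3 : s ^ (γ - 2) * (t - ρ) ≤ m * (t - ρ) := mul_le_mul_of_nonpos_right hms htρ
      nlinarith [mul_le_mul_of_nonneg_left h3 (mul_pos hγ0 hγ1).le]
  rcases le_total ρ n with hor | hor
  · have := integral_mono_on hor (hintl ρ n) hintg
      (fun t ht => key t (lt_of_lt_of_le hρ ht.1) hor ht)
    rw [hlow ρ n] at this
    rw [hFTC]
    calc γ * (γ - 1) / 2 * m * (n - ρ) ^ 2
        = γ * (γ - 1) / 2 * m * ((n - ρ) ^ 2 - (ρ - ρ) ^ 2) := by ring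
      _ ≤ _ := this
  · have hintg' : IntervalIntegrable (fun t : ℝ => γ * t ^ (γ - 1) - γ * ρ ^ (γ - 1))
        volume n ρ := hintg.symm
    have := integral_mono_on hor hintg' (hintl n ρ)
      (fun t ht => key' t (lt_of_lt_of_le hn ht.1) hor ht)
    rw [hlow n ρ] at this
    rw [hFTC, integral_symm n ρ]
    have heq : γ * (γ - 1) / 2 * m * (n - ρ) ^ 2
        = -(γ * (γ - 1) / 2 * m * ((ρ - ρ) ^ 2 - (n - ρ) ^ 2)) := by ring
    rw [heq]
    linarith [this]
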